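/- Let x ∈ [0,1]³ and let t be any real number with max{0, m₁(x)} ≤ t ≤ min{M₁(x), M₂(x), M₃(x), 1}. Define coefficients indexed by the binary vertices: λ₍₀,₀,₀₎ = 1 − t − s(x), λ₍₀,₀,₁₎ = t + x₃ − x₁x₃ − x₂x₃, λ₍₀,₁,₀₎ = t + x₂ − x₁x₂ − x₂x₃, λ₍₀,₁,₁₎ = x₂x₃ − t, λ₍₁,₀,₀₎ = t + x₁ − x₁x₂ − x₁x₃, λ₍₁,₀,₁₎ = x₁x₃ − t, λ₍₁,₁,₀₎ = x₁x₂ − t, λ₍₁,₁,₁₎ = t. Then all eight coefficients λ_p are nonnegative, Σ_{p ∈ {0,1}³} λ_p = 1, and Σ_{p ∈ {0,1}³} λ_p · φ(p) = φ(x). -/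

import Mathlib

/-- The map `φ : ℝ³ → ℝ⁶` of primary variables. -/
noncomputable def phi (x : Fin 3 → ℝ) : Fin 6 → ℝ :=
  ![(x 0 + 2 * x 0 * x 1 + x 1) / 2,
    (x 0 + 2 * x 0 * x 2 + x 2) / 2,
    (x 1 + 2 * x 1 * x 2 + x 2) / 2,
    (x 0 - 2 * x 0 * x 1 + x 1) / 2,
    (x 0 - 2 * x 0 * x 2 + x 2) / 2,
    (x 1 - 2 * x 1 * x 2 + x 2) / 2]

/-- `s(x) = x₁+x₂+x₃−x₁x₂−x₁x₃−x₂x₃`. -/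
def sPoly (x : Fin 3 → ℝ) : ℝ :=
  x 0 + x 1 + x 2 - x 0 * x 1 - x 0 * x 2 - x 1 * x 2

/-- `m₁(x) = max{−x₁(1−x₂−x₃), −x₂(1−x₁−x₃), −x₃(1−x₁−x₂)}`. -/
def m1 (x : Fin 3 → ℝ) : ℝ :=
  max (max (-(x 0) * (1 - x 1 - x 2)) (-(x 1) * (1 - x 0 - x 2)))
    (-(x 2) * (1 - x 0 - x 1))

/-- `M₁(x) = min{1−x₁(1−x₂−x₃), 1−x₂(1−x₁−x₃), 1−x₃(1−x₁−x₂)}`. -/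
def M1 (x : Fin 3 → ℝ) : ℝ :=
  min (min (1 - x 0 * (1 - x 1 - x 2)) (1 - x 1 * (1 - x 0 - x 2)))
    (1 - x 2 * (1 - x 0 - x 1))

/-- `M₂(x) = min{x₁x₂, x₁x₃, x₂x₃}`. -/
def M2 (x : Fin 3 → ℝ) : ℝ :=
  min (min (x 0 * x 1) (x 0 * x 2)) (x 1 * x 2)

/-- `M₃(x) = 1−s(x)`. -/
def M3 (x : Fin 3 → ℝ) : ℝ := 1 - sPoly x

lemma phi000 : phi ![0,0,0] = ![0,0,0,0,0,0] := by
  funext i; fin_cases i <;> norm_num [phi, Matrix.cons_val_two]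
lemma phi001 : phi ![0,0,1] = ![0,1/2,1/2,0,1/2,1/2] := by
  funext i; fin_cases i <;> norm_num [phi, Matrix.cons_val_two]
lemma phi010 : phi ![0,1,0] = ![1/2,0,1/2,1/2,0,1/2] := by
  funext i; fin_cases i <;> norm_num [phi, Matrix.cons_val_two]
lemma phi011 : phi ![0,1,1] = ![1/2,1/2,2,1/2,1/2,0] := by
  funext i; fin_cases i <;> norm_num [phi, Matrix.cons_val_two]
lemma phi100 : phi ![1,0,0] = ![1/2,1/2,0,1/2,1/2,0] := by
  funext i; fin_cases i <;> norm_num [phi, Matrix.cons_val_two]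
lemma phi101 : phi ![1,0,1] = ![1/2,2,1/2,1/2,0,1/2] := by
  funext i; fin_cases i <;> norm_num [phi, Matrix.cons_val_two]
lemma phi110 : phi ![1,1,0] = ![2,1/2,1/2,0,1/2,1/2] := by
  funext i; fin_cases i <;> norm_num [phi, Matrix.cons_val_two]
lemma phi111 : phi ![1,1,1] = ![2,2,2,0,0,0] := by
  funext i; fin_cases i <;> norm_num [phi, Matrix.cons_val_two]

theorem explicit_convex_coefficients (x : Fin 3 → ℝ)
    (hx : ∀ i, x i ∈ Set.Icc (0 : ℝ) 1) (t : ℝ)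
    (ht₁ : max 0 (m1 x) ≤ t)
    (ht₂ : t ≤ min (min (min (M1 x) (M2 x)) (M3 x)) 1)
    (l000 l001 l010 l011 l100 l101 l110 l111 : ℝ)
    (h000 : l000 = 1 - t - sPoly x)
    (h001 : l001 = t + x 2 - x 0 * x 2 - x 1 * x 2)
    (h010 : l010 = t + x 1 - x 0 * x 1 - x 1 * x 2)
    (h011 : l011 = x 1 * x 2 - t)
    (h100 : l100 = t + x 0 - x 0 * x 1 - x 0 * x 2)
    (h101 : l101 = x 0 * x 2 - t)
    (h110 : l110 = x 0 * x 1 - t)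
    (h111 : l111 = t) :
    (0 ≤ l000 ∧ 0 ≤ l001 ∧ 0 ≤ l010 ∧ 0 ≤ l011 ∧
      0 ≤ l100 ∧ 0 ≤ l101 ∧ 0 ≤ l110 ∧ 0 ≤ l111) ∧
    l000 + l001 + l010 + l011 + l100 + l101 + l110 + l111 = 1 ∧
    l000 • phi ![0, 0, 0] + l001 • phi ![0, 0, 1] + l010 • phi ![0, 1, 0] +
      l011 • phi ![0, 1, 1] + l100 • phi ![1, 0, 0] + l101 • phi ![1, 0, 1] +
      l110 • phi ![1, 1, 0] + l111 • phi ![1, 1, 1] = phi x := by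
  simp only [max_le_iff, m1] at ht₁
  simp only [le_min_iff, M1, M2, M3, sPoly] at ht₂
  obtain ⟨h0, ⟨hm1a, hm1b⟩, hm1c⟩ := ht₁
  obtain ⟨⟨⟨⟨⟨hM1a, hM1b⟩, hM1c⟩, ⟨⟨hM2a, hM2b⟩, hM2c⟩⟩, hM3⟩, h1⟩ := ht₂
  refine ⟨⟨?_, ?_, ?_, ?_, ?_, ?_, ?_, ?_⟩, ?_, ?_⟩
  · simp only [h000, sPoly]; linarith
  · simp only [h001]; nlinarith [hm1c]
  · simp only [h010]; nlinarith [hm1b]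
  · simp only [h011]; linarith
  · simp only [h100]; nlinarith [hm1a]
  · simp only [h101]; linarith
  · simp only [h110]; linarith
  · simp only [h111]; linarith
  · subst h000 h001 h010 h011 h100 h101 h110 h111; simp [sPoly]; ring
  · subst h000 h001 h010 h011 h100 h101 h110 h111
    rw [phi000, phi001, phi010, phi011, phi100, phi101, phi110, phi111]
    simp only [Matrix.smul_cons, Matrix.smul_empty, Matrix.add_cons, Matrix.empty_add_empty,
      Matrix.head_cons, Matrix.tail_cons, smul_eq_mul, phi, sPoly]
    funext i
    fin_cases i <;>
      · norm_num
        ring
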